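/- Let q₂ ∈ ℂ[x,y,z] be a homogeneous quadratic form, l ∈ ℂ[x,y,z] a homogeneous linear form, and α ∈ ℂ. If q₂ is not the square of a linear form, then there exist b, c ∈ ℂ such that the quadratic form in the three variables y, z, t given by ψ₂ = q₂(b·y + c·z, y, z) + t·l(b·y + c·z, y, z) + α·t² is not the square of a linear form in y, z, t. -/

import Mathlib

open MvPolynomial

lemma degree_fin3 (m : Fin 3 →₀ ℕ) : m.degree = m 0 + m 1 + m 2 := by
  rw [Finsupp.degree_apply, Finset.sum_subset (Finset.subset_univ _)
    (fun x _ hx => Finsupp.notMem_support_iff.mp hx), Fin.sum_univ_three]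

lemma finsupp3_ext {m n : Fin 3 →₀ ℕ} (h0 : m 0 = n 0) (h1 : m 1 = n 1)
    (h2 : m 2 = n 2) : m = n := by
  ext i; fin_cases i <;> assumption

lemma classify2 (m : Fin 3 →₀ ℕ) (h : m 0 + m 1 + m 2 = 2) :
    m = Finsupp.single 0 2 ∨ m = Finsupp.single 1 2 ∨ m = Finsupp.single 2 2 ∨
    m = Finsupp.single 0 1 + Finsupp.single 1 1 ∨
    m = Finsupp.single 0 1 + Finsupp.single 2 1 ∨
    m = Finsupp.single 1 1 + Finsupp.single 2 1 := by
  have hc : (m 0=2∧m 1=0∧m 2=0) ∨ (m 0=0∧m 1=2∧m 2=0) ∨ (m 0=0∧m 1=0∧m 2=2) ∨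
      (m 0=1∧m 1=1∧m 2=0) ∨ (m 0=1∧m 1=0∧m 2=1) ∨ (m 0=0∧m 1=1∧m 2=1) := by omega
  rcases hc with ⟨a,b,c⟩|⟨a,b,c⟩|⟨a,b,c⟩|⟨a,b,c⟩|⟨a,b,c⟩|⟨a,b,c⟩
  · exact Or.inl (finsupp3_ext (by simp [a]) (by simp [b]) (by simp [c]))
  · exact Or.inr <| Or.inl (finsupp3_ext (by simp [a]) (by simp [b]) (by simp [c]))
  · exact Or.inr <| Or.inr <| Or.inl (finsupp3_ext (by simp [a]) (by simp [b]) (by simp [c]))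
  · exact Or.inr <| Or.inr <| Or.inr <| Or.inl (finsupp3_ext (by simp [a]) (by simp [b]) (by simp [c]))
  · exact Or.inr <| Or.inr <| Or.inr <| Or.inr <| Or.inl (finsupp3_ext (by simp [a]) (by simp [b]) (by simp [c]))
  · exact Or.inr <| Or.inr <| Or.inr <| Or.inr <| Or.inr (finsupp3_ext (by simp [a]) (by simp [b]) (by simp [c]))

lemma classify1 (m : Fin 3 →₀ ℕ) (h : m 0 + m 1 + m 2 = 1) :
    m = Finsupp.single 0 1 ∨ m = Finsupp.single 1 1 ∨ m = Finsupp.single 2 1 := by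
  have hc : (m 0=1∧m 1=0∧m 2=0) ∨ (m 0=0∧m 1=1∧m 2=0) ∨ (m 0=0∧m 1=0∧m 2=1) := by omega
  rcases hc with ⟨a,b,c⟩|⟨a,b,c⟩|⟨a,b,c⟩
  · exact Or.inl (finsupp3_ext (by simp [a]) (by simp [b]) (by simp [c]))
  · exact Or.inr <| Or.inl (finsupp3_ext (by simp [a]) (by simp [b]) (by simp [c]))
  · exact Or.inr <| Or.inr (finsupp3_ext (by simp [a]) (by simp [b]) (by simp [c]))

lemma hXmul (i j : Fin 3) (a : ℂ) :
    C a * (X i * X j) = monomial (Finsupp.single i 1 + Finsupp.single j 1) (a : ℂ) := by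
  rw [X, X, monomial_mul, C_mul_monomial]; ring_nf

lemma dec2 (q : MvPolynomial (Fin 3) ℂ) (h : q.IsHomogeneous 2) :
    q = C (coeff (Finsupp.single 0 2) q) * X 0 ^ 2
      + C (coeff (Finsupp.single 1 2) q) * X 1 ^ 2
      + C (coeff (Finsupp.single 2 2) q) * X 2 ^ 2
      + C (coeff (Finsupp.single 0 1 + Finsupp.single 1 1) q) * (X 0 * X 1)
      + C (coeff (Finsupp.single 0 1 + Finsupp.single 2 1) q) * (X 0 * X 2)
      + C (coeff (Finsupp.single 1 1 + Finsupp.single 2 1) q) * (X 1 * X 2) := by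
  ext m
  by_cases hd : m.degree = 2
  · rcases classify2 m (by rw [← degree_fin3]; exact hd) with rfl|rfl|rfl|rfl|rfl|rfl <;>
      simp [hXmul, coeff_X_pow, coeff_monomial, coeff_C_mul, Finsupp.ext_iff,
        Fin.forall_fin_succ, Finsupp.single_apply, Finsupp.add_apply]
  · rw [h.coeff_eq_zero hd]
    have hm2 : m 0 + m 1 + m 2 ≠ 2 := by rw [← degree_fin3]; exact hd
    have n1 : m ≠ Finsupp.single 0 2 := fun e => hm2 (by simp [e])
    have n2 : m ≠ Finsupp.single 1 2 := fun e => hm2 (by simp [e])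
    have n3 : m ≠ Finsupp.single 2 2 := fun e => hm2 (by simp [e])
    have n4 : m ≠ Finsupp.single 0 1 + Finsupp.single 1 1 := fun e => hm2 (by simp [e])
    have n5 : m ≠ Finsupp.single 0 1 + Finsupp.single 2 1 := fun e => hm2 (by simp [e])
    have n6 : m ≠ Finsupp.single 1 1 + Finsupp.single 2 1 := fun e => hm2 (by simp [e])
    simp [hXmul, coeff_X_pow, coeff_monomial, coeff_C_mul,
      Ne.symm n1, Ne.symm n2, Ne.symm n3, Ne.symm n4, Ne.symm n5, Ne.symm n6]

lemma dec1 (q : MvPolynomial (Fin 3) ℂ) (h : q.IsHomogeneous 1) :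
    q = C (coeff (Finsupp.single 0 1) q) * X 0
      + C (coeff (Finsupp.single 1 1) q) * X 1
      + C (coeff (Finsupp.single 2 1) q) * X 2 := by
  ext m
  by_cases hd : m.degree = 1
  · rcases classify1 m (by rw [← degree_fin3]; exact hd) with rfl|rfl|rfl <;>
      simp [coeff_C_mul, coeff_X', Finsupp.ext_iff,
        Fin.forall_fin_succ, Finsupp.single_apply]
  · rw [h.coeff_eq_zero hd]
    have hm1 : m 0 + m 1 + m 2 ≠ 1 := by rw [← degree_fin3]; exact hd
    have n1 : m ≠ Finsupp.single 0 1 := fun e => hm1 (by simp [e])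
    have n2 : m ≠ Finsupp.single 1 1 := fun e => hm1 (by simp [e])
    have n3 : m ≠ Finsupp.single 2 1 := fun e => hm1 (by simp [e])
    simp [coeff_C_mul, coeff_X', Ne.symm n1, Ne.symm n2, Ne.symm n3]

/-- Lemma 4.4 (algebraic content): if the quadratic part `q₂` of a `cA_n` singularity is
not the square of a linear form, then for some `b, c` the quadratic part
`ψ₂ = q₂(by+cz, y, z) + t·l(by+cz, y, z) + α·t²` of the hyperplane section `x = by + cz`
is not the square of a linear form in `y, z, t`.
Variables: `x = X 0`, `y = X 1`, `z = X 2` in the source ring; `y = X 0`, `z = X 1`,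
`t = X 2` in the target ring. -/
theorem section_quadratic_not_square
    (q₂ l : MvPolynomial (Fin 3) ℂ) (α : ℂ)
    (hq₂ : q₂.IsHomogeneous 2) (hl : l.IsHomogeneous 1)
    (hns : ¬ ∃ u v w : ℂ,
      q₂ = (MvPolynomial.C u * X 0 + MvPolynomial.C v * X 1
            + MvPolynomial.C w * X 2) ^ 2) :
    ∃ b c : ℂ, ¬ ∃ u v w : ℂ,
      (aeval ![MvPolynomial.C b * X 0 + MvPolynomial.C c * X 1,
               (X 0 : MvPolynomial (Fin 3) ℂ), X 1] q₂)
        + X 2 * (aeval ![MvPolynomial.C b * X 0 + MvPolynomial.C c * X 1,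
               (X 0 : MvPolynomial (Fin 3) ℂ), X 1] l)
        + MvPolynomial.C α * X 2 ^ 2
        = (MvPolynomial.C u * X 0 + MvPolynomial.C v * X 1
            + MvPolynomial.C w * X 2) ^ 2 := by
  by_contra hcon
  push_neg at hcon
  have hq := dec2 q₂ hq₂
  have hld := dec1 l hl
  set A := coeff (Finsupp.single 0 2) q₂ with hA
  set B := coeff (Finsupp.single 1 2) q₂ with hB
  set C' := coeff (Finsupp.single 2 2) q₂ with hC'
  set D := coeff (Finsupp.single 0 1 + Finsupp.single 1 1) q₂ with hD
  set E := coeff (Finsupp.single 0 1 + Finsupp.single 2 1) q₂ with hE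
  set F := coeff (Finsupp.single 1 1 + Finsupp.single 2 1) q₂ with hF
  -- the discriminant identity for all b c
  have Hd : ∀ b c : ℂ, (2*A*b*c + E*b + D*c + F)^2
      = 4*(A*b^2 + D*b + B)*(A*c^2 + E*c + C') := by
    intro b c
    obtain ⟨u, v, w, heq⟩ := hcon b c
    rw [hq, hld] at heq
    have h1 := congrArg (eval ![(1:ℂ), 0, 0]) heq
    have h2 := congrArg (eval ![(0:ℂ), 1, 0]) heq
    have h3 := congrArg (eval ![(1:ℂ), 1, 0]) heq
    simp [map_add, map_mul, map_pow, aeval_X, aeval_C, eval_X, eval_C] at h1 h2 h3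
    have key : 2*A*b*c + E*b + D*c + F = 2*u*v := by linear_combination h3 - h1 - h2
    linear_combination (2*A*b*c + E*b + D*c + F + 2*u*v) * key
      - 4*v^2*h1 - 4*(A*b^2 + D*b + B)*h2
  have hE2 : E^2 = 4*A*C' := by linear_combination (Hd 1 0)/2 + (Hd (-1) 0)/2 - Hd 0 0
  have hD2 : D^2 = 4*A*B := by linear_combination (Hd 0 1)/2 + (Hd 0 (-1))/2 - Hd 0 0
  have hF2 : F^2 = 4*B*C' := by linear_combination Hd 0 0
  have hAF : 2*A*F = D*E := by
    linear_combination (Hd 1 1 - Hd 1 (-1) - Hd (-1) 1 + Hd (-1) (-1))/8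
  have hEF : E*F = 2*C'*D := by linear_combination (Hd 1 0 - Hd (-1) 0)/4
  have hDF : D*F = 2*B*E := by linear_combination (Hd 0 1 - Hd 0 (-1))/4
  -- construct the square root of q₂
  apply hns
  have sq : ∀ z : ℂ, ∃ x : ℂ, x^2 = z := fun z =>
    IsAlgClosed.exists_pow_nat_eq z (n := 2) (by norm_num)
  have final : ∀ u v w : ℂ, A = u^2 → B = v^2 → C' = w^2 → D = 2*u*v →
      E = 2*u*w → F = 2*v*w → q₂ = (C u * X 0 + C v * X 1 + C w * X 2)^2 := by
    intro u v w ha hb hc hd he hf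
    rw [hq, ha, hb, hc, hd, he, hf]
    push_cast [map_pow, map_mul, map_ofNat]
    ring
  by_cases hA0 : A = 0
  · have hDz : D = 0 := by
      have : D^2 = 0 := by rw [hD2, hA0]; ring
      exact pow_eq_zero_iff (by norm_num) |>.mp this
    have hEz : E = 0 := by
      have : E^2 = 0 := by rw [hE2, hA0]; ring
      exact pow_eq_zero_iff (by norm_num) |>.mp this
    by_cases hB0 : B = 0
    · have hFz : F = 0 := by
        have : F^2 = 0 := by rw [hF2, hB0]; ring
        exact pow_eq_zero_iff (by norm_num) |>.mp this
      obtain ⟨w, hw⟩ := sq C'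
      exact ⟨0, 0, w, final 0 0 w (by simp [hA0]) (by simp [hB0]) hw.symm
        (by simp [hDz]) (by simp [hEz]) (by simp [hFz])⟩
    · obtain ⟨v, hv⟩ := sq B
      have hv0 : v ≠ 0 := fun h => hB0 (by rw [← hv, h]; ring)
      refine ⟨0, v, F/(2*v), final 0 v _ (by simp [hA0]) hv.symm ?_
        (by simp [hDz]) (by simp [hEz]) (by field_simp)⟩
      field_simp
      linear_combination -hF2 + 4*C'*hv
  · obtain ⟨u, hu⟩ := sq A
    have hu0 : u ≠ 0 := fun h => hA0 (by rw [← hu, h]; ring)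
    refine ⟨u, D/(2*u), E/(2*u), final u _ _ hu.symm ?_ ?_
      (by field_simp) (by field_simp) ?_⟩
    · field_simp
      linear_combination -hD2 + 4*B*hu
    · field_simp
      linear_combination -hE2 + 4*C'*hu
    · field_simp
      linear_combination 2*F*hu + hAF
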